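/- Let $G$ be a finite group, $r \geq 2$, and $a \in G$. The number of solutions $x \in G$ of the equation $x^r = a$ is a multiple of $\gcd(r, |C_G(a)|)$, where $C_G(a)$ is the centralizer of $a$ in $G$. -/

import Mathlib

open Finset

attribute [local instance] Classical.propDecidable

universe u
variable {G : Type u} [Group G] [Fintype G]

omit [Fintype G] in
/-- order of a solution of `x ^ p^k = c` where `c ≠ 1` has `p`-power order. -/
lemma order_of_sol {p : ℕ} (hp : p.Prime) {k e : ℕ} {x c : G} (hc : c ≠ 1)
    (hce : orderOf c = p ^ e) (hx : x ^ p ^ k = c) : orderOf x = p ^ (k + e) := by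
  have hxke : x ^ p ^ (k + e) = 1 := by
    rw [pow_add, pow_mul, hx, ← hce, pow_orderOf_eq_one]
  have hdvd : orderOf x ∣ p ^ (k + e) := orderOf_dvd_iff_pow_eq_one.mpr hxke
  obtain ⟨γ, hγle, hγ⟩ := (Nat.dvd_prime_pow hp).mp hdvd
  have hkγ : k < γ := by
    by_contra hle
    push_neg at hle
    have : orderOf x ∣ p ^ k := hγ ▸ pow_dvd_pow p hle
    exact hc (hx ▸ orderOf_dvd_iff_pow_eq_one.mp this)
  have hcd : c ^ p ^ (γ - k) = 1 := by
    rw [← hx, ← pow_mul, ← pow_add]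
    rw [show k + (γ - k) = γ by omega]
    exact hγ ▸ pow_orderOf_eq_one x
  have h1 : p ^ e ∣ p ^ (γ - k) := hce ▸ orderOf_dvd_iff_pow_eq_one.mpr hcd
  have he : e ≤ γ - k := (Nat.pow_dvd_pow_iff_le_right hp.one_lt).mp h1
  have hγe : γ ≤ k + e := by
    by_contra hgt
    push_neg at hgt
    have := (Nat.pow_dvd_pow_iff_le_right hp.one_lt).mp (hγ ▸ hdvd)
    omega
  rw [hγ]
  congr 1
  omega

/-- Key counting lemma: for a nontrivial p-element `c`, the number of solutions of
`x ^ p^k = c` is divisible by `p^k`. -/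
lemma count_pointed {p : ℕ} (hp : p.Prime) (k : ℕ) {c : G} (hc : c ≠ 1) {E : ℕ}
    (hcE : c ^ p ^ E = 1) :
    p ^ k ∣ #(univ.filter fun x : G => x ^ p ^ k = c) := by
  obtain ⟨e, heE, he⟩ := (Nat.dvd_prime_pow hp).mp (orderOf_dvd_iff_pow_eq_one.mpr hcE)
  have hmaps : ∀ x ∈ (univ.filter fun x : G => x ^ p ^ k = c),
      Subgroup.zpowers x ∈ (univ.filter fun x : G => x ^ p ^ k = c).image
        (fun x => Subgroup.zpowers x) :=
    fun x hx => mem_image_of_mem _ hx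
  rw [card_eq_sum_card_fiberwise hmaps]
  refine dvd_sum ?_
  intro H hH
  obtain ⟨x₀, hx₀S, hx₀H⟩ := mem_image.mp hH
  subst hx₀H
  have hx₀sol : x₀ ^ p ^ k = c := (mem_filter.mp hx₀S).2
  have hordx₀ : orderOf x₀ = p ^ (k + e) := order_of_sol hp hc he hx₀sol
  have hcomm : ∀ y ∈ Subgroup.zpowers x₀, Commute x₀ y := by
    intro y hy
    obtain ⟨n, rfl⟩ := Subgroup.mem_zpowers_iff.mp hy
    exact (Commute.refl x₀).zpow_right n
  have hordpow : orderOf (x₀ ^ p ^ e) = p ^ k := by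
    rw [orderOf_pow, hordx₀]
    have hg : Nat.gcd (p ^ (k + e)) (p ^ e) = p ^ e := by
      apply Nat.gcd_eq_right
      exact pow_dvd_pow p (by omega)
    rw [hg, Nat.pow_div (by omega) hp.pos]
    congr 1
    omega
  have hcard : #(univ.filter fun z : G => z ∈ Subgroup.zpowers (x₀ ^ p ^ e)) = p ^ k := by
    rw [← Fintype.card_subtype, ← Nat.card_eq_fintype_card, Nat.card_zpowers, hordpow]
  suffices hfib : #((univ.filter fun x : G => x ^ p ^ k = c).filter
      (fun y => Subgroup.zpowers y = Subgroup.zpowers x₀)) =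
      #(univ.filter fun z : G => z ∈ Subgroup.zpowers (x₀ ^ p ^ e)) by
    rw [hfib, hcard]
  apply card_bij' (i := fun y _ => x₀⁻¹ * y) (j := fun z _ => x₀ * z)
  · -- i maps into target
    intro y hy
    simp only [mem_filter, mem_univ, true_and] at hy
    obtain ⟨hysol, hyzp⟩ := hy
    have hyx₀ : y ∈ Subgroup.zpowers x₀ := hyzp ▸ Subgroup.mem_zpowers y
    obtain ⟨n, hn⟩ := Subgroup.mem_zpowers_iff.mp hyx₀
    simp only [mem_filter, mem_univ, true_and]
    have hz : x₀⁻¹ * y = x₀ ^ (n - 1 : ℤ) := by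
      rw [← hn, ← zpow_neg_one, ← zpow_add]
      congr 1
      omega
    have hzpk : (x₀⁻¹ * y) ^ p ^ k = 1 := by
      have hcy : Commute x₀⁻¹ y := ((hcomm y hyx₀)).inv_left
      rw [hcy.mul_pow, hysol, inv_pow, hx₀sol, inv_mul_cancel]
    rw [hz] at hzpk
    rw [← zpow_natCast, ← zpow_mul] at hzpk
    have hdd : ((p : ℤ) ^ (k + e)) ∣ (n - 1) * (p ^ k : ℕ) := by
      have := orderOf_dvd_iff_zpow_eq_one.mpr hzpk
      rw [hordx₀] at this
      exact_mod_cast this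
    have hpe : ((p:ℤ) ^ e) ∣ (n - 1) := by
      have h2 : ((p:ℤ) ^ e) * ((p:ℤ) ^ k) ∣ (n - 1) * ((p:ℤ)^ k) := by
        rw [← pow_add]
        rw [show e + k = k + e by omega]
        exact_mod_cast hdd
      have hpk0 : ((p:ℤ) ^ k) ≠ 0 := pow_ne_zero _ (by exact_mod_cast hp.pos.ne')
      exact (mul_dvd_mul_iff_right hpk0).mp h2
    obtain ⟨m, hm⟩ := hpe
    refine Subgroup.mem_zpowers_iff.mpr ⟨m, ?_⟩
    rw [hz, ← zpow_natCast x₀ (p ^ e), ← zpow_mul]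
    congr 1
    rw [hm]
    push_cast
    ring
  · -- j maps into source
    intro z hz
    simp only [mem_filter, mem_univ, true_and] at hz
    obtain ⟨m, hm⟩ := Subgroup.mem_zpowers_iff.mp hz
    have hzx₀ : z ∈ Subgroup.zpowers x₀ := by
      refine Subgroup.mem_zpowers_iff.mpr ⟨(p ^ e : ℕ) * m, ?_⟩
      rw [zpow_mul, zpow_natCast, hm]
    have hc0 : Commute x₀ z := hcomm z hzx₀
    have hzpk : z ^ p ^ k = 1 := by
      rw [← hm, ← zpow_natCast, ← zpow_mul, mul_comm, zpow_mul, zpow_natCast, ← pow_mul, ← pow_add]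
      rw [show e + k = k + e by omega, ← hordx₀, pow_orderOf_eq_one, one_zpow]
    have hysol : (x₀ * z) ^ p ^ k = c := by
      rw [hc0.mul_pow, hzpk, hx₀sol, mul_one]
    simp only [mem_filter, mem_univ, true_and]
    refine ⟨hysol, ?_⟩
    have hle : Subgroup.zpowers (x₀ * z) ≤ Subgroup.zpowers x₀ :=
      Subgroup.zpowers_le.mpr (Subgroup.mul_mem _ (Subgroup.mem_zpowers x₀) hzx₀)
    have hordy : orderOf (x₀ * z) = p ^ (k + e) := order_of_sol hp hc he hysol
    refine Subgroup.eq_of_le_of_card_ge hle ?_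
    rw [Nat.card_zpowers, Nat.card_zpowers, hordy, hordx₀]
  · intro y _; group
  · intro z _; group

/-- transfer a filtered count over a subgroup to the subtype -/
lemma count_subtype (H : Subgroup G) (P : G → Prop) :
    #(univ.filter fun g : G => g ∈ H ∧ P g) = #(univ.filter fun h : H => P (h : G)) := by
  refine card_bij' (i := fun g hg => (⟨g, (mem_filter.mp hg).2.1⟩ : H))
    (j := fun h _ => (h : G)) ?_ ?_ ?_ ?_
  · intro g hg
    exact mem_filter.mpr ⟨mem_univ _, (mem_filter.mp hg).2.2⟩
  · intro h hh
    exact mem_filter.mpr ⟨mem_univ _, h.2, (mem_filter.mp hh).2⟩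
  · intro g _; rfl
  · intro h _; rfl

/-- normalize the exponent of a `p`-power equation to the `p`-valuation of the group order -/
lemma pow_eq_one_norm {p : ℕ} (hp : p.Prime) {A : ℕ}
    (hA : (Fintype.card G).factorization p ≤ A) (x : G) :
    x ^ p ^ A = 1 ↔ x ^ p ^ (Fintype.card G).factorization p = 1 := by
  constructor
  · intro h
    obtain ⟨j, hjA, hj⟩ := (Nat.dvd_prime_pow hp).mp (orderOf_dvd_iff_pow_eq_one.mpr h)
    have hj2 : p ^ j ∣ Fintype.card G := hj ▸ orderOf_dvd_card
    have : j ≤ (Fintype.card G).factorization p :=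
      (Nat.Prime.pow_dvd_iff_le_factorization hp Fintype.card_ne_zero).mp hj2
    exact orderOf_dvd_iff_pow_eq_one.mp (hj ▸ pow_dvd_pow p this)
  · intro h
    exact orderOf_dvd_iff_pow_eq_one.mp
      ((orderOf_dvd_iff_pow_eq_one.mpr h).trans (pow_dvd_pow p hA))

/-- Conjugacy-class-wise divisibility of a weighted sum. -/
lemma orbit_sum_dvd (D : ℕ) (f : G → ℕ) (T : Finset G)
    (hT : ∀ (g : G), ∀ s ∈ T, g * s * g⁻¹ ∈ T)
    (hf : ∀ (g s : G), f (g * s * g⁻¹) = f s)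
    (hdvd : ∀ s ∈ T, D * Nat.card {g : G // g * s = s * g} ∣ Fintype.card G * f s) :
    D ∣ ∑ s ∈ T, f s := by
  have hmaps : ∀ s ∈ T, (univ.filter fun s' : G => IsConj s s') ∈
      T.image (fun s => univ.filter fun s' : G => IsConj s s') :=
    fun s hs => mem_image_of_mem _ hs
  rw [← sum_fiberwise_of_maps_to hmaps f]
  refine dvd_sum ?_
  intro c hc
  obtain ⟨s₀, hs₀T, hs₀c⟩ := mem_image.mp hc
  subst hs₀c
  -- the fiber is the conjugacy class of s₀
  have hA : T.filter (fun s => (univ.filter fun s' : G => IsConj s s') =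
      (univ.filter fun s' : G => IsConj s₀ s')) = univ.filter (fun s => IsConj s₀ s) := by
    ext s
    simp only [mem_filter, mem_univ, true_and]
    constructor
    · rintro ⟨hsT, hfilt⟩
      have : s ∈ univ.filter fun s' : G => IsConj s s' :=
        mem_filter.mpr ⟨mem_univ _, IsConj.refl s⟩
      rw [hfilt] at this
      exact (mem_filter.mp this).2
    · intro hconj
      obtain ⟨g, hg⟩ := isConj_iff.mp hconj
      constructor
      · exact hg ▸ hT g s₀ hs₀T
      · ext s'
        simp only [mem_filter, mem_univ, true_and]
        exact ⟨fun h => hconj.trans h, fun h => hconj.symm.trans h⟩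
  rw [hA]
  -- f is constant on the class
  have hconst : ∀ s ∈ univ.filter (fun s => IsConj s₀ s), f s = f s₀ := by
    intro s hs
    obtain ⟨g, hg⟩ := isConj_iff.mp ((mem_filter.mp hs).2)
    rw [← hg, hf]
  rw [sum_congr rfl hconst, sum_const, smul_eq_mul]
  -- orbit-stabilizer: #class * #centralizer = card G
  have horb : #(univ.filter (fun s => IsConj s₀ s)) *
      #(univ.filter fun g : G => g * s₀ = s₀ * g) = Fintype.card G := by
    have hmaps2 : ∀ g : G, g ∈ (univ : Finset G) →
        g * s₀ * g⁻¹ ∈ univ.filter (fun s => IsConj s₀ s) :=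
      fun g _ => mem_filter.mpr ⟨mem_univ _, isConj_iff.mpr ⟨g, rfl⟩⟩
    have htot := card_eq_sum_card_fiberwise hmaps2
    rw [card_univ] at htot
    have hfibcard : ∀ s ∈ univ.filter (fun s => IsConj s₀ s),
        #(univ.filter (fun g : G => g * s₀ * g⁻¹ = s)) =
        #(univ.filter fun g : G => g * s₀ = s₀ * g) := by
      intro s hs
      obtain ⟨g₀, hg₀⟩ := isConj_iff.mp (mem_filter.mp hs).2
      apply card_bij' (i := fun g _ => g₀⁻¹ * g) (j := fun c _ => g₀ * c)
      · intro g hg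
        have key : g * s₀ * g⁻¹ = g₀ * s₀ * g₀⁻¹ := by
          rw [(mem_filter.mp hg).2, hg₀]
        simp only [mem_filter, mem_univ, true_and]
        calc g₀⁻¹ * g * s₀ = g₀⁻¹ * (g * s₀ * g⁻¹) * g := by group
          _ = g₀⁻¹ * (g₀ * s₀ * g₀⁻¹) * g := by rw [key]
          _ = s₀ * (g₀⁻¹ * g) := by group
      · intro c hcm
        have hcc := (mem_filter.mp hcm).2
        simp only [mem_filter, mem_univ, true_and]
        calc g₀ * c * s₀ * (g₀ * c)⁻¹ = g₀ * (c * s₀) * c⁻¹ * g₀⁻¹ := by group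
          _ = g₀ * (s₀ * c) * c⁻¹ * g₀⁻¹ := by rw [hcc]
          _ = g₀ * s₀ * g₀⁻¹ := by group
          _ = s := hg₀
      · intro g _; group
      · intro c _; group
    rw [Finset.sum_congr rfl hfibcard, sum_const, smul_eq_mul] at htot
    exact htot.symm
  -- conclude divisibility for this class
  have hCpos : 0 < #(univ.filter fun g : G => g * s₀ = s₀ * g) :=
    card_pos.mpr ⟨1, mem_filter.mpr ⟨mem_univ _, by rw [one_mul, mul_one]⟩⟩
  have h1 := hdvd s₀ hs₀T
  have hbridge : Nat.card {g : G // g * s₀ = s₀ * g} =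
      #(univ.filter fun g : G => g * s₀ = s₀ * g) := by
    rw [Nat.card_eq_fintype_card, Fintype.card_subtype]
  rw [hbridge, ← horb] at h1
  have h2 : (#(univ.filter (fun s => IsConj s₀ s)) * f s₀) *
      #(univ.filter fun g : G => g * s₀ = s₀ * g) =
      #(univ.filter (fun s => IsConj s₀ s)) *
      #(univ.filter fun g : G => g * s₀ = s₀ * g) * f s₀ := by ring
  rw [← h2] at h1
  have h3 : D * #(univ.filter fun g : G => g * s₀ = s₀ * g) =
      D * #(univ.filter fun g : G => g * s₀ = s₀ * g) := rfl
  exact (Nat.mul_dvd_mul_iff_right hCpos).mp h1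

lemma card_pelts (p : ℕ) (hp : p.Prime) :
    ∀ (n : ℕ) (G : Type u) [Group G] [Fintype G], Fintype.card G ≤ n →
    p ^ ((Fintype.card G).factorization p) ∣
      #(univ.filter fun x : G => x ^ p ^ ((Fintype.card G).factorization p) = 1) := by
  intro n
  induction n with
  | zero =>
    intro G _ _ h
    have : 0 < Fintype.card G := Fintype.card_pos
    omega
  | succ n IH =>
    intro G _ _ hcard
    set β := (Fintype.card G).factorization p with hβ
    set e1 := p ^ β with he1
    set e2 := Fintype.card G / e1 with he2
    have hGpos : 0 < Fintype.card G := Fintype.card_pos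
    have he1e2 : e1 * e2 = Fintype.card G := Nat.ordProj_mul_ordCompl_eq_self _ p
    have hcop : Nat.Coprime p e2 := Nat.coprime_ordCompl hp hGpos.ne'
    have he1pos : 0 < e1 := pow_pos hp.pos β
    have he2pos : 0 < e2 :=
      Nat.div_pos (Nat.le_of_dvd hGpos (Nat.ordProj_dvd _ p)) he1pos
    obtain ⟨a1, ha1⟩ : ∃ a1, e1 * a1 ≡ 1 [MOD e2] := by
      rcases Nat.lt_or_ge 1 e2 with h2 | h2
      · obtain ⟨m, -, hm⟩ := Nat.exists_mul_mod_eq_one_of_coprime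
          (Nat.Coprime.pow_left β hcop) h2
        exact ⟨m, by unfold Nat.ModEq; rw [hm, Nat.mod_eq_of_lt h2]⟩
      · have h1 : e2 = 1 := by omega
        exact ⟨1, by rw [h1]; exact Nat.modEq_one⟩
    -- the fibration of G over its p'-parts
    have hmapsT : ∀ g : G, g ∈ (univ : Finset G) →
        g ^ (e1 * a1) ∈ univ.filter (fun s : G => s ^ e2 = 1) := by
      intro g _
      refine mem_filter.mpr ⟨mem_univ _, ?_⟩
      rw [← pow_mul]
      refine orderOf_dvd_iff_pow_eq_one.mp (dvd_trans orderOf_dvd_card ?_)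
      rw [← he1e2]
      exact ⟨a1, by ring⟩
    have hmaster := card_eq_sum_card_fiberwise hmapsT
    rw [card_univ] at hmaster
    have hfib : ∀ s ∈ univ.filter (fun s : G => s ^ e2 = 1),
        #(univ.filter (fun g : G => g ^ (e1 * a1) = s)) =
        #(univ.filter fun u : G => u * s = s * u ∧ u ^ e1 = 1) := by
      intro s hs
      have hse2 : s ^ e2 = 1 := (mem_filter.mp hs).2
      have hs_self : s ^ (e1 * a1) = s := by
        have h1 : e1 * a1 ≡ 1 [MOD orderOf s] :=
          Nat.ModEq.of_dvd (orderOf_dvd_iff_pow_eq_one.mpr hse2) ha1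
        calc s ^ (e1 * a1) = s ^ 1 := pow_eq_pow_iff_modEq.mpr h1
          _ = s := pow_one s
      refine card_bij' (i := fun g _ => g * s⁻¹) (j := fun u _ => u * s) ?_ ?_ ?_ ?_
      · intro g hg
        have hgs : g ^ (e1 * a1) = s := (mem_filter.mp hg).2
        have hcomm : Commute g s := hgs ▸ (Commute.refl g).pow_right _
        refine mem_filter.mpr ⟨mem_univ _, ?_, ?_⟩
        · calc (g * s⁻¹) * s = g := by group
            _ = s * (g * s⁻¹) := by
              rw [← mul_assoc, ← hcomm.eq]
              group
        · have hc2 : Commute g s⁻¹ := hcomm.inv_right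
          rw [hc2.mul_pow, ← hgs, inv_pow, ← pow_mul]
          rw [← zpow_natCast g e1, ← zpow_natCast g (e1 * a1 * e1), ← zpow_neg, ← zpow_add]
          refine orderOf_dvd_iff_zpow_eq_one.mp ?_
          refine dvd_trans (Int.natCast_dvd_natCast.mpr orderOf_dvd_card) ?_
          rw [← he1e2]
          have hin : (e2 : ℤ) ∣ 1 - (e1 * a1 : ℕ) := ha1.dvd
          obtain ⟨v, hv⟩ := hin
          refine ⟨v, ?_⟩
          push_cast
          push_cast at hv
          calc (e1 : ℤ) + -(e1 * a1 * e1) = e1 * (1 - e1 * a1) := by ring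
            _ = e1 * (e2 * v) := by rw [hv]
            _ = e1 * e2 * v := by ring
      · intro u hu
        obtain ⟨hcl, hue1⟩ := (mem_filter.mp hu).2
        have hcomm : Commute u s := hcl
        refine mem_filter.mpr ⟨mem_univ _, ?_⟩
        rw [hcomm.mul_pow, pow_mul, hue1, one_pow, one_mul, hs_self]
      · intro g _; group
      · intro u _; group
    rw [sum_congr rfl hfib] at hmaster
    rw [← sum_filter_add_sum_filter_not (univ.filter (fun s : G => s ^ e2 = 1))
      (fun s => ∀ g : G, g * s = s * g)
      (fun s => #(univ.filter fun u : G => u * s = s * u ∧ u ^ e1 = 1))] at hmaster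
    -- central part is w * Ufull
    have hcentral : ∀ s ∈ (univ.filter (fun s : G => s ^ e2 = 1)).filter
        (fun s => ∀ g : G, g * s = s * g),
        #(univ.filter fun u : G => u * s = s * u ∧ u ^ e1 = 1) =
        #(univ.filter fun u : G => u ^ e1 = 1) := by
      intro s hs
      have hcen := (mem_filter.mp hs).2
      congr 1
      ext u
      simp only [mem_filter, mem_univ, true_and]
      exact ⟨fun h => h.2, fun h => ⟨hcen u, h⟩⟩
    rw [sum_congr rfl hcentral, sum_const, smul_eq_mul] at hmaster
    -- noncentral part is divisible by p ^ β
    have hnc : p ^ β ∣ ∑ s ∈ (univ.filter (fun s : G => s ^ e2 = 1)).filter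
        (fun s => ¬ ∀ g : G, g * s = s * g),
        #(univ.filter fun u : G => u * s = s * u ∧ u ^ e1 = 1) := by
      apply orbit_sum_dvd
      · -- conjugation stability
        intro g s hs
        simp only [mem_filter, mem_univ, true_and] at hs ⊢
        obtain ⟨hse2, hsnc⟩ := hs
        refine ⟨?_, ?_⟩
        · rw [conj_pow, hse2, mul_one, mul_inv_cancel]
        · intro hforall
          apply hsnc
          intro h
          have h3 := hforall (g * h * g⁻¹)
          have h4 : g * (h * s) * g⁻¹ = g * (s * h) * g⁻¹ := by
            calc g * (h * s) * g⁻¹ = (g * h * g⁻¹) * (g * s * g⁻¹) := by group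
              _ = (g * s * g⁻¹) * (g * h * g⁻¹) := h3
              _ = g * (s * h) * g⁻¹ := by group
          exact mul_left_cancel (mul_right_cancel h4)
      · -- conjugation invariance of the weight
        intro g s
        refine card_bij' (i := fun u _ => g⁻¹ * u * g) (j := fun u _ => g * u * g⁻¹) ?_ ?_ ?_ ?_
        · intro u hu
          obtain ⟨hcu, hue⟩ := (mem_filter.mp hu).2
          simp only [mem_filter, mem_univ, true_and]
          refine ⟨?_, ?_⟩
          · have h4 : g * ((g⁻¹ * u * g) * s) * g⁻¹ = g * (s * (g⁻¹ * u * g)) * g⁻¹ := by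
              calc g * ((g⁻¹ * u * g) * s) * g⁻¹ = u * (g * s * g⁻¹) := by group
                _ = (g * s * g⁻¹) * u := hcu
                _ = g * (s * (g⁻¹ * u * g)) * g⁻¹ := by group
            exact mul_left_cancel (mul_right_cancel h4)
          · rw [show g⁻¹ * u * g = g⁻¹ * u * (g⁻¹)⁻¹ by group, conj_pow, hue, mul_one,
              mul_inv_cancel]
        · intro u hu
          obtain ⟨hcu, hue⟩ := (mem_filter.mp hu).2
          simp only [mem_filter, mem_univ, true_and]
          refine ⟨?_, ?_⟩
          · have h4 : g⁻¹ * ((g * u * g⁻¹) * (g * s * g⁻¹)) * g =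
                g⁻¹ * ((g * s * g⁻¹) * (g * u * g⁻¹)) * g := by
              calc g⁻¹ * ((g * u * g⁻¹) * (g * s * g⁻¹)) * g = u * s := by group
                _ = s * u := hcu
                _ = g⁻¹ * ((g * s * g⁻¹) * (g * u * g⁻¹)) * g := by group
            exact mul_left_cancel (mul_right_cancel h4)
          · rw [conj_pow, hue, mul_one, mul_inv_cancel]
        · intro u _; group
        · intro u _; group
      · -- per-class divisibility via the inductive hypothesis
        intro s hs
        simp only [mem_filter, mem_univ, true_and] at hs
        obtain ⟨hse2, hsnc⟩ := hs
        set H := Subgroup.centralizer ({s} : Set G) with hH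
        have hmemH : ∀ g : G, g ∈ H ↔ s * g = g * s := by
          intro g
          rw [Subgroup.mem_centralizer_iff]
          simp
        obtain ⟨g₀, hg₀⟩ := not_forall.mp hsnc
        have hg₀H : g₀ ∉ H := by
          rw [hmemH]
          intro h
          exact hg₀ h.symm
        have hcardlt : Fintype.card H < Fintype.card G := Fintype.card_subtype_lt hg₀H
        have hIH := IH H (by omega)
        have hβH_le : (Fintype.card H).factorization p ≤ β := by
          have hdvd : Fintype.card H ∣ Fintype.card G := by
            have := Subgroup.card_subgroup_dvd_card H
            simpa [Nat.card_eq_fintype_card] using this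
          have := (Nat.factorization_le_iff_dvd Fintype.card_ne_zero
            Fintype.card_ne_zero).mpr hdvd
          exact this p
        have hVs : #(univ.filter fun u : G => u * s = s * u ∧ u ^ e1 = 1) =
            #(univ.filter fun u : H =>
              u ^ p ^ ((Fintype.card H).factorization p) = 1) := by
          have step1 : (univ.filter fun u : G => u * s = s * u ∧ u ^ e1 = 1) =
              (univ.filter fun u : G => u ∈ H ∧ u ^ e1 = 1) := by
            ext u
            simp only [mem_filter, mem_univ, true_and]
            rw [hmemH]
            constructor
            · rintro ⟨h1, h2⟩; exact ⟨h1.symm, h2⟩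
            · rintro ⟨h1, h2⟩; exact ⟨h1.symm, h2⟩
          rw [step1, count_subtype H (fun u => u ^ e1 = 1)]
          congr 1
          ext u
          simp only [mem_filter, mem_univ, true_and]
          rw [he1]
          rw [show ((u : G) ^ p ^ β = 1) ↔ ((u ^ p ^ β : H) : G) = ((1 : H) : G) by push_cast; rfl]
          rw [Subtype.coe_inj]
          exact pow_eq_one_norm hp hβH_le u
        have hCfin : Nat.card {g : G // g * s = s * g} = Fintype.card H := by
          rw [Nat.card_congr (Equiv.subtypeEquivRight
            (fun g => ⟨fun h => (hmemH g).mpr h.symm, fun h => ((hmemH g).mp h).symm⟩)),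
            Nat.card_eq_fintype_card]
        obtain ⟨idx, hidx⟩ : Fintype.card H ∣ Fintype.card G := by
          have := Subgroup.card_subgroup_dvd_card H
          simpa [Nat.card_eq_fintype_card] using this
        have hidx0 : idx ≠ 0 := by
          intro h
          rw [h, mul_zero] at hidx
          omega
        have hsplit : β = (Fintype.card H).factorization p + idx.factorization p := by
          rw [hβ, hidx, Nat.factorization_mul Fintype.card_ne_zero hidx0]
          simp
        rw [hCfin, hVs]
        have hEq1 : Fintype.card G *
            #(univ.filter fun u : H => u ^ p ^ ((Fintype.card H).factorization p) = 1) =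
            ((#(univ.filter fun u : H =>
              u ^ p ^ ((Fintype.card H).factorization p) = 1)) * idx) * Fintype.card H := by
          rw [hidx]; ring
        have hEq2 : p ^ β * Fintype.card H =
            (p ^ ((Fintype.card H).factorization p) * p ^ (idx.factorization p)) *
              Fintype.card H := by
          rw [← pow_add, ← hsplit]
        rw [hEq1, hEq2]
        have hIH2 : p ^ ((Fintype.card H).factorization p) ∣
            #(univ.filter fun u : H =>
              u ^ p ^ ((Fintype.card H).factorization p) = 1) := by
          convert hIH using 3
        exact mul_dvd_mul_right (mul_dvd_mul hIH2 (Nat.ordProj_dvd idx p)) _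
    -- Cauchy: p does not divide the number of central p'-elements
    have hpw : ¬ p ∣ #((univ.filter (fun s : G => s ^ e2 = 1)).filter
        (fun s => ∀ g : G, g * s = s * g)) := by
      intro hdvd
      let Zc : Subgroup G :=
        { carrier := {s : G | (∀ g : G, g * s = s * g) ∧ s ^ e2 = 1}
          one_mem' := ⟨fun g => by rw [mul_one, one_mul], one_pow e2⟩
          mul_mem' := by
            rintro a b ⟨ha, hae⟩ ⟨hb, hbe⟩
            refine ⟨fun g => ?_, ?_⟩
            · calc g * (a * b) = g * a * b := by rw [mul_assoc]
                _ = a * g * b := by rw [ha g]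
                _ = a * (g * b) := by rw [mul_assoc]
                _ = a * (b * g) := by rw [hb g]
                _ = a * b * g := by rw [mul_assoc]
            · have hab : Commute a b := hb a
              rw [hab.mul_pow, hae, hbe, one_mul]
          inv_mem' := by
            rintro a ⟨ha, hae⟩
            refine ⟨fun g => ?_, by rw [inv_pow, hae, inv_one]⟩
            calc g * a⁻¹ = a⁻¹ * (a * g) * a⁻¹ := by group
              _ = a⁻¹ * (g * a) * a⁻¹ := by rw [← ha g]
              _ = a⁻¹ * g := by group }
      have hwZ : #((univ.filter (fun s : G => s ^ e2 = 1)).filter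
          (fun s => ∀ g : G, g * s = s * g)) = Fintype.card Zc := by
        rw [Fintype.card_subtype]
        congr 1
        ext s
        simp only [mem_filter, mem_univ, true_and]
        constructor
        · rintro ⟨h1, h2⟩; exact ⟨h2, h1⟩
        · rintro ⟨h1, h2⟩; exact ⟨h2, h1⟩
      haveI : Fact p.Prime := ⟨hp⟩
      rw [hwZ] at hdvd
      obtain ⟨z, hz⟩ := exists_prime_orderOf_dvd_card (G := Zc) p hdvd
      have hz2 : (z : G) ^ e2 = 1 := z.2.2
      have hze2 : orderOf (z : G) ∣ e2 := orderOf_dvd_iff_pow_eq_one.mpr hz2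
      rw [Subgroup.orderOf_coe, hz] at hze2
      exact ((Nat.Prime.coprime_iff_not_dvd hp).mp hcop) hze2
    -- assemble
    have hdvdG : p ^ β ∣ Fintype.card G := Nat.ordProj_dvd _ p
    have hwU : p ^ β ∣ #((univ.filter (fun s : G => s ^ e2 = 1)).filter
        (fun s => ∀ g : G, g * s = s * g)) * #(univ.filter fun u : G => u ^ e1 = 1) := by
      obtain ⟨S2, hS2⟩ := hnc
      have : #((univ.filter (fun s : G => s ^ e2 = 1)).filter
          (fun s => ∀ g : G, g * s = s * g)) * #(univ.filter fun u : G => u ^ e1 = 1) =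
          Fintype.card G - p ^ β * S2 := by omega
      rw [this]
      exact Nat.dvd_sub hdvdG ⟨S2, rfl⟩
    exact (Nat.Coprime.pow_left β
      ((Nat.Prime.coprime_iff_not_dvd hp).mpr hpw)).dvd_of_dvd_mul_left hwU

/-- `p^min(k,β)` divides the number of solutions of `x ^ p^k = 1`. -/
lemma count_id {p : ℕ} (hp : p.Prime) (k : ℕ) :
    p ^ min k ((Fintype.card G).factorization p) ∣
      #(univ.filter fun x : G => x ^ p ^ k = 1) := by
  set β := (Fintype.card G).factorization p with hβ
  have hmaps : ∀ x ∈ (univ.filter fun x : G => x ^ p ^ (k + β) = 1),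
      x ^ p ^ k ∈ (univ.filter fun c : G => c ^ p ^ β = 1) := by
    intro x hx
    refine mem_filter.mpr ⟨mem_univ _, ?_⟩
    rw [← pow_mul, ← pow_add]
    exact (mem_filter.mp hx).2
  have hU := card_eq_sum_card_fiberwise hmaps
  have hSid : (univ.filter fun x : G => x ^ p ^ (k + β) = 1) =
      (univ.filter fun x : G => x ^ p ^ β = 1) := by
    ext x
    simp only [mem_filter, mem_univ, true_and]
    exact pow_eq_one_norm hp (by omega) x
  have hfibeq : ∀ c ∈ (univ.filter fun c : G => c ^ p ^ β = 1),
      (univ.filter fun x : G => x ^ p ^ (k + β) = 1).filter (fun x => x ^ p ^ k = c) =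
      univ.filter (fun x => x ^ p ^ k = c) := by
    intro c hc
    ext x
    simp only [mem_filter, mem_univ, true_and]
    constructor
    · rintro ⟨h1, h2⟩; exact h2
    · intro h
      refine ⟨?_, h⟩
      rw [pow_add, pow_mul, h]
      exact (mem_filter.mp hc).2
  rw [sum_congr rfl (fun c hc => by rw [hfibeq c hc])] at hU
  rw [hSid] at hU
  -- split off c = 1
  have h1T : (1 : G) ∈ (univ.filter fun c : G => c ^ p ^ β = 1) :=
    mem_filter.mpr ⟨mem_univ _, one_pow _⟩
  rw [← Finset.add_sum_erase _ _ h1T] at hU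
  have hrest : p ^ min k β ∣
      ∑ c ∈ ((univ.filter fun c : G => c ^ p ^ β = 1)).erase 1,
        #(univ.filter fun x : G => x ^ p ^ k = c) := by
    refine dvd_trans (pow_dvd_pow p (min_le_left k β)) (dvd_sum ?_)
    intro c hc
    have hc1 : c ≠ 1 := (Finset.mem_erase.mp hc).1
    have hcE : c ^ p ^ β = 1 := (mem_filter.mp (Finset.mem_erase.mp hc).2).2
    exact count_pointed hp k hc1 hcE
  have hUdvd : p ^ min k β ∣ #(univ.filter fun x : G => x ^ p ^ β = 1) :=
    dvd_trans (pow_dvd_pow p (min_le_right k β))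
      (card_pelts p hp (Fintype.card G) G le_rfl)
  obtain ⟨S2, hS2⟩ := hrest
  have : #(univ.filter fun x : G => x ^ p ^ k = 1) =
      #(univ.filter fun x : G => x ^ p ^ β = 1) - p ^ min k β * S2 := by omega
  rw [this]
  exact Nat.dvd_sub hUdvd ⟨S2, rfl⟩

/-- central case of the pointed prime power count -/
lemma count_central {p : ℕ} (hp : p.Prime) (k : ℕ) (a : G) (ha : ∀ g : G, g * a = a * g) :
    p ^ min k ((Fintype.card G).factorization p) ∣
      #(univ.filter fun x : G => x ^ p ^ k = a) := by
  set m := orderOf a with hm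
  set α := m.factorization p with hα
  set m' := m / p ^ α with hm'
  have hm0 : m ≠ 0 := (orderOf_pos a).ne'
  have hcop : Nat.Coprime p m' := Nat.coprime_ordCompl hp hm0
  have hmm : p ^ α * m' = m := Nat.ordProj_mul_ordCompl_eq_self m p
  obtain ⟨t, ht⟩ : ∃ t, p ^ k * t ≡ 1 [MOD m'] := by
    rcases Nat.lt_or_ge 1 m' with h2 | h2
    · obtain ⟨v, -, hv⟩ := Nat.exists_mul_mod_eq_one_of_coprime
        (Nat.Coprime.pow_left k hcop) h2
      exact ⟨v, by unfold Nat.ModEq; rw [hv, Nat.mod_eq_of_lt h2]⟩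
    · have hm1 : m' = 1 := by
        have : m' ≠ 0 := by
          intro h
          rw [h, mul_zero] at hmm
          exact hm0 hmm.symm
        exact Nat.le_antisymm h2 (Nat.one_le_iff_ne_zero.mpr this)
      exact ⟨1, by rw [hm1]; exact Nat.modEq_one⟩
  have hbcomm : ∀ g : G, Commute g (a ^ t) := fun g => (show Commute g a from ha g).pow_right t
  -- the translated target
  have hcz : a * ((a ^ t) ^ p ^ k)⁻¹ = a ^ ((1 : ℤ) - (t * p ^ k : ℕ)) := by
    rw [zpow_sub, zpow_one, zpow_natCast, ← pow_mul]
  have hcpe : (a * ((a ^ t) ^ p ^ k)⁻¹) ^ p ^ α = 1 := by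
    rw [hcz, ← zpow_natCast (a ^ ((1 : ℤ) - (t * p ^ k : ℕ))), ← zpow_mul]
    refine orderOf_dvd_iff_zpow_eq_one.mp ?_
    have hdm : (m' : ℤ) ∣ 1 - t * p ^ k := by
      have := ht.dvd
      push_cast at this ⊢
      obtain ⟨v, hv⟩ := this
      exact ⟨v, by linarith [hv]⟩
    obtain ⟨v, hv⟩ := hdm
    rw [← hm]
    refine ⟨v, ?_⟩
    rw [← hmm]
    push_cast
    rw [hv]
    ring
  have htrans : #(univ.filter fun x : G => x ^ p ^ k = a) =
      #(univ.filter fun x : G => x ^ p ^ k = a * ((a ^ t) ^ p ^ k)⁻¹) := by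
    refine card_bij' (i := fun x _ => x * (a ^ t)⁻¹) (j := fun x _ => x * (a ^ t)) ?_ ?_ ?_ ?_
    · intro x hx
      have hxs : x ^ p ^ k = a := (mem_filter.mp hx).2
      refine mem_filter.mpr ⟨mem_univ _, ?_⟩
      rw [((hbcomm x).inv_right).mul_pow, hxs, inv_pow]
    · intro x hx
      have hxs : x ^ p ^ k = a * ((a ^ t) ^ p ^ k)⁻¹ := (mem_filter.mp hx).2
      refine mem_filter.mpr ⟨mem_univ _, ?_⟩
      rw [(hbcomm x).mul_pow, hxs, inv_mul_cancel_right]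
    · intro x _; group
    · intro x _; group
  rcases eq_or_ne (a * ((a ^ t) ^ p ^ k)⁻¹) 1 with hc1 | hc1
  · rw [htrans, hc1]
    exact count_id hp k
  · rw [htrans]
    exact dvd_trans (pow_dvd_pow p (min_le_left _ _)) (count_pointed hp k hc1 hcpe)

/-- pointed prime power count: general case via the centralizer -/
lemma count_pointed_general {p : ℕ} (hp : p.Prime) (k : ℕ) (a : G) :
    p ^ min k ((Fintype.card (Subgroup.centralizer ({a} : Set G))).factorization p) ∣
      #(univ.filter fun x : G => x ^ p ^ k = a) := by
  set H := Subgroup.centralizer ({a} : Set G) with hH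
  have haH : a ∈ H := by
    rw [Subgroup.mem_centralizer_iff]
    intro h hh
    rw [Set.mem_singleton_iff.mp hh]
  have hsub : (univ.filter fun x : G => x ^ p ^ k = a) =
      (univ.filter fun x : G => x ∈ H ∧ x ^ p ^ k = a) := by
    ext x
    simp only [mem_filter, mem_univ, true_and]
    refine ⟨fun hx => ⟨?_, hx⟩, fun hx => hx.2⟩
    rw [Subgroup.mem_centralizer_iff]
    intro h hh
    rw [Set.mem_singleton_iff.mp hh, ← hx]
    exact ((Commute.refl x).pow_left (p ^ k)).eq
  rw [hsub, count_subtype H (fun x => x ^ p ^ k = a)]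
  have hfe : (univ.filter fun h : H => (h : G) ^ p ^ k = a) =
      (univ.filter fun h : H => h ^ p ^ k = (⟨a, haH⟩ : H)) := by
    ext h
    simp only [mem_filter, mem_univ, true_and]
    rw [show ((h : G) ^ p ^ k = a) ↔ ((h ^ p ^ k : H) : G) = ((⟨a, haH⟩ : H) : G) by
      push_cast; rfl]
    exact Subtype.coe_inj
  rw [hfe]
  have hcen : ∀ g : H, g * (⟨a, haH⟩ : H) = (⟨a, haH⟩ : H) * g := by
    intro g
    have := Subgroup.mem_centralizer_iff.mp g.2 a (Set.mem_singleton a)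
    exact Subtype.ext (by push_cast; exact this.symm)
  convert count_central hp k (⟨a, haH⟩ : H) hcen using 3

/-- per-prime divisibility of the solution count of `x ^ r = a` -/
lemma count_gcd_prime {p : ℕ} (hp : p.Prime) (r : ℕ) (hr : r ≠ 0) (a : G) :
    p ^ min (r.factorization p)
      ((Fintype.card (Subgroup.centralizer ({a} : Set G))).factorization p) ∣
      #(univ.filter fun x : G => x ^ r = a) := by
  set k := r.factorization p with hk
  set u := r / p ^ k with hu
  have hru : p ^ k * u = r := Nat.ordProj_mul_ordCompl_eq_self r p
  set H := Subgroup.centralizer ({a} : Set G) with hH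
  have haH : a ∈ H := by
    rw [Subgroup.mem_centralizer_iff]
    intro h hh
    rw [Set.mem_singleton_iff.mp hh]
  -- transfer the count into H
  have hsub : (univ.filter fun x : G => x ^ r = a) =
      (univ.filter fun x : G => x ∈ H ∧ x ^ r = a) := by
    ext x
    simp only [mem_filter, mem_univ, true_and]
    refine ⟨fun hx => ⟨?_, hx⟩, fun hx => hx.2⟩
    rw [Subgroup.mem_centralizer_iff]
    intro h hh
    rw [Set.mem_singleton_iff.mp hh, ← hx]
    exact ((Commute.refl x).pow_left r).eq
  rw [hsub, count_subtype H (fun x => x ^ r = a)]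
  have hfe : (univ.filter fun h : H => (h : G) ^ r = a) =
      (univ.filter fun h : H => h ^ r = (⟨a, haH⟩ : H)) := by
    ext h
    simp only [mem_filter, mem_univ, true_and]
    rw [show ((h : G) ^ r = a) ↔ ((h ^ r : H) : G) = ((⟨a, haH⟩ : H) : G) by
      push_cast; rfl]
    exact Subtype.coe_inj
  rw [hfe]
  have hcen : ∀ g : H, g * (⟨a, haH⟩ : H) = (⟨a, haH⟩ : H) * g := by
    intro g
    have := Subgroup.mem_centralizer_iff.mp g.2 a (Set.mem_singleton a)
    exact Subtype.ext (by push_cast; exact this.symm)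
  set aH : H := (⟨a, haH⟩ : H) with haHd
  -- fiber the solutions over y = x ^ p ^ k
  have hmaps : ∀ x ∈ (univ.filter fun x : H => x ^ r = aH),
      x ^ p ^ k ∈ (univ.filter fun y : H => y ^ u = aH) := by
    intro x hx
    refine mem_filter.mpr ⟨mem_univ _, ?_⟩
    rw [← pow_mul, hru]
    exact (mem_filter.mp hx).2
  rw [card_eq_sum_card_fiberwise hmaps]
  have hfib : ∀ y ∈ (univ.filter fun y : H => y ^ u = aH),
      (univ.filter fun x : H => x ^ r = aH).filter (fun x => x ^ p ^ k = y) =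
      univ.filter (fun x : H => x ^ p ^ k = y) := by
    intro y hy
    ext x
    simp only [mem_filter, mem_univ, true_and]
    constructor
    · rintro ⟨h1, h2⟩; exact h2
    · intro h
      refine ⟨?_, h⟩
      rw [← hru, pow_mul, h]
      exact (mem_filter.mp hy).2
  rw [sum_congr rfl (fun y hy => by rw [hfib y hy])]
  -- conjugacy class sum inside H
  apply orbit_sum_dvd
  · -- stability of T under conjugation (aH is central in H)
    intro g y hy
    simp only [mem_filter, mem_univ, true_and] at hy ⊢
    rw [conj_pow, hy]
    have := hcen g
    calc g * aH * g⁻¹ = aH * g * g⁻¹ := by rw [this]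
      _ = aH := by group
  · -- invariance of the weight under conjugation
    intro g y
    refine card_bij' (i := fun x _ => g⁻¹ * x * g) (j := fun x _ => g * x * g⁻¹) ?_ ?_ ?_ ?_
    · intro x hx
      have hxs : x ^ p ^ k = g * y * g⁻¹ := (mem_filter.mp hx).2
      simp only [mem_filter, mem_univ, true_and]
      rw [show g⁻¹ * x * g = g⁻¹ * x * (g⁻¹)⁻¹ by group, conj_pow, hxs]
      group
    · intro x hx
      have hxs : x ^ p ^ k = y := (mem_filter.mp hx).2
      simp only [mem_filter, mem_univ, true_and]
      rw [conj_pow, hxs]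
    · intro x _; group
    · intro x _; group
  · -- per-class divisibility via the centralizers within H
    intro y hy
    set C := Subgroup.centralizer ({y} : Set H) with hC
    have hiff : ∀ g : H, (g * y = y * g) ↔ g ∈ C := by
      intro g
      rw [hC, Subgroup.mem_centralizer_iff]
      constructor
      · intro h h' hh'
        rw [Set.mem_singleton_iff.mp hh']
        exact h.symm
      · intro h
        exact (h y (Set.mem_singleton y)).symm
    have hCfin : Nat.card {g : H // g * y = y * g} = Fintype.card C := by
      rw [Nat.card_congr (Equiv.subtypeEquivRight hiff), Nat.card_eq_fintype_card]
    have hdvdf : p ^ min k ((Fintype.card C).factorization p) ∣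
        #(univ.filter fun x : H => x ^ p ^ k = y) := by
      convert count_pointed_general (G := H) hp k y using 3
    rw [hCfin]
    obtain ⟨idx, hidx⟩ : Fintype.card C ∣ Fintype.card H := by
      have := Subgroup.card_subgroup_dvd_card C
      simpa [Nat.card_eq_fintype_card] using this
    have hidx0 : idx ≠ 0 := by
      intro h
      rw [h, mul_zero] at hidx
      have : 0 < Fintype.card H := Fintype.card_pos
      omega
    have hsplit : (Fintype.card H).factorization p =
        (Fintype.card C).factorization p + idx.factorization p := by
      rw [hidx, Nat.factorization_mul Fintype.card_ne_zero hidx0]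
      simp
    have harith : min k ((Fintype.card H).factorization p) ≤
        idx.factorization p + min k ((Fintype.card C).factorization p) := by
      omega
    have hstep : p ^ min k ((Fintype.card H).factorization p) ∣
        idx * #(univ.filter fun x : H => x ^ p ^ k = y) := by
      refine dvd_trans (pow_dvd_pow p harith) ?_
      rw [pow_add]
      exact mul_dvd_mul (Nat.ordProj_dvd idx p) hdvdf
    have hEq1 : Fintype.card H * #(univ.filter fun x : H => x ^ p ^ k = y) =
        (idx * #(univ.filter fun x : H => x ^ p ^ k = y)) * Fintype.card C := by
      rw [hidx]; ring
    rw [hEq1]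
    exact mul_dvd_mul_right hstep _

theorem stmt_5 (G : Type*) [Group G] [Fintype G] (r : ℕ) (hr : 2 ≤ r) (a : G) :
    Nat.gcd r (Nat.card (Subgroup.centralizer {a})) ∣
      Set.ncard {x : G | x ^ r = a} := by
  have hncard : {x : G | x ^ r = a}.ncard = #(univ.filter fun x : G => x ^ r = a) := by
    rw [Set.ncard_eq_toFinset_card', Set.toFinset_setOf]
  rw [hncard]
  rcases eq_or_ne (#(univ.filter fun x : G => x ^ r = a)) 0 with h0 | h0
  · rw [h0]; exact dvd_zero _
  have hr0 : r ≠ 0 := by omega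
  have hC0 : Nat.card (Subgroup.centralizer ({a} : Set G)) ≠ 0 := by
    rw [Nat.card_eq_fintype_card]
    exact Fintype.card_ne_zero
  have hgcd0 : r.gcd (Nat.card (Subgroup.centralizer ({a} : Set G))) ≠ 0 :=
    Nat.gcd_ne_zero_left hr0
  rw [← Nat.factorization_le_iff_dvd hgcd0 h0]
  intro q
  rcases em q.Prime with hq | hq
  · have hfg : (r.gcd (Nat.card (Subgroup.centralizer ({a} : Set G)))).factorization q =
        min (r.factorization q)
          ((Nat.card (Subgroup.centralizer ({a} : Set G))).factorization q) := by
      rw [Nat.factorization_gcd hr0 hC0]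
      rfl
    rw [hfg]
    have := count_gcd_prime (G := G) hq r hr0 a
    rw [Nat.card_eq_fintype_card]
    exact (Nat.Prime.pow_dvd_iff_le_factorization hq h0).mp this
  · rw [Nat.factorization_eq_zero_of_not_prime _ hq]
    omega
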